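/- Let r ≥ 2 and suppose ℓ ∈ (0,∞)^r satisfies F̄_r(ℓ) = 0. If ℓⁱ ≤ ε for some index i and some ε > 0, then for every index j ≠ i one has ℓʲ > -log(exp(ε) - 1). -/

import Mathlib

/-- `F̄_r(ℓ) = ∑_{S⊆[r]} (1-2|S|) e^{-ℓ^S}`. -/
noncomputable def Fbar (r : ℕ) (ℓ : Fin r → ℝ) : ℝ :=
  ∑ S : Finset (Fin r), (1 - 2 * (S.card : ℝ)) * Real.exp (-(∑ i ∈ S, ℓ i))

private lemma sum_powerset_prod {α : Type*} [DecidableEq α] (u : Finset α) (x : α → ℝ) :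
    ∑ S ∈ u.powerset, ∏ i ∈ S, x i = ∏ i ∈ u, (1 + x i) := by
  induction u using Finset.induction_on with
  | empty => simp
  | insert a u ha ih =>
    rw [Finset.sum_powerset_insert ha, Finset.prod_insert ha, ← ih]
    have : ∀ S ∈ u.powerset, ∏ i ∈ insert a S, x i = x a * ∏ i ∈ S, x i := by
      intro S hS
      rw [Finset.prod_insert fun h => ha (Finset.mem_powerset.mp hS h)]
    rw [Finset.sum_congr rfl this, ← Finset.mul_sum]
    ring

private lemma key_identity {α : Type*} [DecidableEq α] (u : Finset α) (x : α → ℝ)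
    (hx : ∀ j ∈ u, 1 + x j ≠ 0) :
    ∑ S ∈ u.powerset, (1 - 2 * (S.card : ℝ)) * ∏ i ∈ S, x i
      = (∏ i ∈ u, (1 + x i)) * (1 - 2 * ∑ j ∈ u, x j / (1 + x j)) := by
  induction u using Finset.induction_on with
  | empty => simp
  | insert a u ha ih =>
    have hxa : 1 + x a ≠ 0 := hx a (Finset.mem_insert_self a u)
    have hxu : ∀ j ∈ u, 1 + x j ≠ 0 := fun j hj => hx j (Finset.mem_insert_of_mem hj)
    rw [Finset.sum_powerset_insert ha, Finset.prod_insert ha, Finset.sum_insert ha]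
    have h1 : ∀ S ∈ u.powerset,
        (1 - 2 * ((insert a S).card : ℝ)) * ∏ i ∈ insert a S, x i
        = x a * ((1 - 2 * (S.card : ℝ)) * ∏ i ∈ S, x i) - 2 * x a * ∏ i ∈ S, x i := by
      intro S hS
      have haS : a ∉ S := fun h => ha (Finset.mem_powerset.mp hS h)
      rw [Finset.card_insert_of_notMem haS, Finset.prod_insert haS]
      push_cast
      ring
    rw [Finset.sum_congr rfl h1, Finset.sum_sub_distrib, ← Finset.mul_sum, ← Finset.mul_sum,
      sum_powerset_prod, ih hxu]
    field_simp
    ring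

/-- If `F̄_r(ℓ) = 0` with positive lengths and `ℓⁱ ≤ ε`, then every other
length satisfies `ℓʲ > -Real.log (Real.exp ε - 1)`. -/
theorem short_edge_forces_long (r : ℕ) (hr : 2 ≤ r) (ℓ : Fin r → ℝ)
    (hpos : ∀ j, 0 < ℓ j) (hF : Fbar r ℓ = 0)
    (ε : ℝ) (hε : 0 < ε) (i : Fin r) (hi : ℓ i ≤ ε) :
    ∀ j : Fin r, j ≠ i → ℓ j > -Real.log (Real.exp ε - 1) := by
  intro j hj
  set x : Fin r → ℝ := fun k => Real.exp (-ℓ k) with hxdef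
  have hxpos : ∀ k, 0 < x k := fun k => Real.exp_pos _
  have hx1 : ∀ k, 1 + x k ≠ 0 := fun k => by positivity
  -- Rewrite Fbar using the identity
  have hFbar : Fbar r ℓ
      = (∏ k, (1 + x k)) * (1 - 2 * ∑ k, x k / (1 + x k)) := by
    rw [Fbar, ← key_identity Finset.univ x (fun k _ => hx1 k), Finset.powerset_univ]
    apply Finset.sum_congr rfl
    intro S _
    congr 1
    rw [← Finset.sum_neg_distrib, Real.exp_sum]
  have hprodpos : 0 < ∏ k, (1 + x k) :=
    Finset.prod_pos fun k _ => by positivity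
  have hsum : (∑ k, x k / (1 + x k)) = 1 / 2 := by
    have := hF
    rw [hFbar] at this
    have h2 : 1 - 2 * ∑ k, x k / (1 + x k) = 0 := by
      rcases mul_eq_zero.mp this with h | h
      · exact absurd h (ne_of_gt hprodpos)
      · exact h
    linarith
  -- two-term bound
  have hterm : ∀ k, 0 ≤ x k / (1 + x k) := fun k => by positivity
  have hpair : x i / (1 + x i) + x j / (1 + x j) ≤ 1 / 2 := by
    rw [← hsum]
    have hsub : ({i, j} : Finset (Fin r)) ⊆ Finset.univ := Finset.subset_univ _
    have := Finset.sum_le_sum_of_subset_of_nonneg hsub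
      (fun k _ _ => hterm k)
    rwa [Finset.sum_pair (fun h => hj h.symm)] at this
  -- bounds
  set u : ℝ := Real.exp (-ε) with hu
  have hu0 : 0 < u := Real.exp_pos _
  have hu1 : u < 1 := by
    rw [hu]
    have : -ε < 0 := by linarith
    calc Real.exp (-ε) < Real.exp 0 := Real.exp_lt_exp.mpr this
      _ = 1 := Real.exp_zero
  have hxi : u ≤ x i := Real.exp_le_exp.mpr (by linarith)
  have hmono : u / (1 + u) ≤ x i / (1 + x i) := by
    rw [div_le_div_iff₀ (by positivity) (by positivity)]
    nlinarith
  have hxj_frac : x j / (1 + x j) ≤ (1 - u) / (2 * (1 + u)) := by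
    have h1 : x j / (1 + x j) ≤ 1 / 2 - u / (1 + u) := by linarith
    rw [div_sub_div _ _ (by norm_num : (2:ℝ) ≠ 0) (by positivity : (1:ℝ) + u ≠ 0)] at h1
    calc x j / (1 + x j) ≤ (1 * (1 + u) - 2 * u) / (2 * (1 + u)) := h1
      _ = (1 - u) / (2 * (1 + u)) := by ring_nf
  have hxj : x j < Real.exp ε - 1 := by
    have hxj2 : x j ≤ (1 - u) / (1 + 3 * u) := by
      rw [div_le_div_iff₀ (by positivity) (by positivity)] at hxj_frac
      rw [le_div_iff₀ (by positivity)]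
      nlinarith
    have hlt : (1 - u) / (1 + 3 * u) < (1 - u) / u := by
      apply div_lt_div_of_pos_left (by linarith) hu0 (by linarith)
    have heq : (1 - u) / u = Real.exp ε - 1 := by
      rw [hu, Real.exp_neg]
      field_simp
    linarith [heq ▸ hlt]
  -- conclude
  have hE1 : 0 < Real.exp ε - 1 := by
    have : (1:ℝ) < Real.exp ε := by
      calc (1:ℝ) = Real.exp 0 := (Real.exp_zero).symm
        _ < Real.exp ε := Real.exp_lt_exp.mpr hε
    linarith
  have : -ℓ j < Real.log (Real.exp ε - 1) := by
    rw [← Real.exp_lt_exp, Real.exp_log hE1]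
    exact hxj
  linarith
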